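/- Let (A, C, B) be a recollement of abelian categories. If C is an object of C such that i^!(j_!(j^*(C))) = 0, then the counit map ε_C : j_! j^*(C) → C is a monomorphism. -/

import Mathlib

open CategoryTheory CategoryTheory.Limits

universe v₁ v₂ v₃ u₁ u₂ u₃

/-- A recollement of abelian categories `(𝒜, 𝒞, ℬ)`, consisting of additive functors
`i_* : 𝒜 ⥤ 𝒞`, `i^*, i^! : 𝒞 ⥤ 𝒜`, `j^* : 𝒞 ⥤ ℬ`, `j_!, j_* : ℬ ⥤ 𝒞` with adjoint pairs
`(i^*, i_*)`, `(i_*, i^!)`, `(j_!, j^*)`, `(j^*, j_*)`, with `i_*`, `j_!`, `j_*` fully faithful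
and the essential image of `i_*` equal to the kernel of `j^*`. -/
structure Recollement (𝒜 : Type u₁) (𝒞 : Type u₂) (ℬ : Type u₃)
    [Category.{v₁} 𝒜] [Category.{v₂} 𝒞] [Category.{v₃} ℬ]
    [Abelian 𝒜] [Abelian 𝒞] [Abelian ℬ] where
  /-- the functor `i^* : 𝒞 ⥤ 𝒜` -/
  iStar : 𝒞 ⥤ 𝒜
  /-- the functor `i_* : 𝒜 ⥤ 𝒞` -/
  iIns : 𝒜 ⥤ 𝒞
  /-- the functor `i^! : 𝒞 ⥤ 𝒜` -/
  iShriek : 𝒞 ⥤ 𝒜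
  /-- the functor `j_! : ℬ ⥤ 𝒞` -/
  jShriek : ℬ ⥤ 𝒞
  /-- the functor `j^* : 𝒞 ⥤ ℬ` -/
  jStar : 𝒞 ⥤ ℬ
  /-- the functor `j_* : ℬ ⥤ 𝒞` -/
  jIns : ℬ ⥤ 𝒞
  iStar_additive : iStar.Additive
  iIns_additive : iIns.Additive
  iShriek_additive : iShriek.Additive
  jShriek_additive : jShriek.Additive
  jStar_additive : jStar.Additive
  jIns_additive : jIns.Additive
  /-- the adjunction `i^* ⊣ i_*` -/
  adj₁ : iStar ⊣ iIns
  /-- the adjunction `i_* ⊣ i^!` -/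
  adj₂ : iIns ⊣ iShriek
  /-- the adjunction `j_! ⊣ j^*` -/
  adj₃ : jShriek ⊣ jStar
  /-- the adjunction `j^* ⊣ j_*` -/
  adj₄ : jStar ⊣ jIns
  iIns_full : iIns.Full
  iIns_faithful : iIns.Faithful
  jShriek_full : jShriek.Full
  jShriek_faithful : jShriek.Faithful
  jIns_full : jIns.Full
  jIns_faithful : jIns.Faithful
  /-- `im i_* = ker j^*` -/
  im_eq_ker : ∀ X : 𝒞, IsZero (jStar.obj X) ↔ ∃ A₀ : 𝒜, Nonempty (iIns.obj A₀ ≅ X)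

variable {𝒜 : Type u₁} {𝒞 : Type u₂} {ℬ : Type u₃}
  [Category.{v₁} 𝒜] [Category.{v₂} 𝒞] [Category.{v₃} ℬ]
  [Abelian 𝒜] [Abelian 𝒞] [Abelian ℬ]

/-- `0 ⟶ X ⟶ Y ⟶ Z ⟶ 0` is a short exact sequence. -/
def IsSES {𝒟 : Type*} [Category 𝒟] [Abelian 𝒟] {X Y Z : 𝒟}
    (f : X ⟶ Y) (g : Y ⟶ Z) : Prop :=
  ∃ w : f ≫ g = 0, (ShortComplex.mk f g w).ShortExact

/-- If `C` is an object of `𝒞` such that `i^!(j_!(j^*(C))) = 0`, then the counit map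
`ε_C : j_! j^*(C) → C` is a monomorphism. -/
theorem stmt_1 (R : Recollement 𝒜 𝒞 ℬ) (X : 𝒞)
    (h : IsZero (R.iShriek.obj (R.jShriek.obj (R.jStar.obj X)))) :
    Mono (R.adj₃.counit.app X) := by
  haveI := R.jShriek_full
  haveI := R.jShriek_faithful
  haveI := R.adj₃.rightAdjoint_preservesLimits
  set ε := R.adj₃.counit.app X with hε
  haveI : IsIso (R.adj₃.unit.app (R.jStar.obj X) ≫ R.jStar.map ε) := by
    rw [hε, R.adj₃.right_triangle_components]
    exact IsIso.id _
  haveI : IsIso (R.jStar.map ε) :=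
    IsIso.of_isIso_comp_left (R.adj₃.unit.app (R.jStar.obj X)) (R.jStar.map ε)
  have hK : IsZero (R.jStar.obj (kernel ε)) :=
    (isZero_zero ℬ).of_iso (PreservesKernel.iso R.jStar ε ≪≫ kernel.ofMono (R.jStar.map ε))
  obtain ⟨A, ⟨e⟩⟩ := (R.im_eq_ker _).mp hK
  haveI : Subsingleton (A ⟶ R.iShriek.obj ((R.jStar ⋙ R.jShriek).obj X)) :=
    ⟨fun f g => h.eq_of_tgt f g⟩
  haveI : Subsingleton (R.iIns.obj A ⟶ (R.jStar ⋙ R.jShriek).obj X) :=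
    (R.adj₂.homEquiv A _).subsingleton
  have h0 : e.hom ≫ kernel.ι ε = 0 := Subsingleton.elim _ _
  have hι : kernel.ι ε = 0 := by
    rw [← cancel_epi e.hom, comp_zero]
    exact h0
  exact Abelian.mono_of_kernel_ι_eq_zero _ hι
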